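/- If H and K are finite groups each admitting an abelian partition, then H × K admits an abelian partition, and ϑ_a(H × K) ≤ ϑ_a(H) · ϑ_a(K). -/
import Mathlib


/-- An abelian partition of a group `G`: a family of `n` pairwise disjoint sets covering `G`,
each of size at least 2 and consisting of pairwise commuting elements. -/
def IsAbelianPartition {G : Type*} [Group G] {n : ℕ} (A : Fin n → Set G) : Prop :=
  (∀ i, 2 ≤ (A i).ncard) ∧ (⋃ i, A i) = Set.univ ∧
    Pairwise (Function.onFun Disjoint A) ∧
    ∀ i, ∀ x ∈ A i, ∀ y ∈ A i, x * y = y * x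

/-- The minimal number of parts in an abelian partition of `G` (0 if none exists). -/
noncomputable def apDegree (G : Type*) [Group G] : ℕ :=
  sInf {n | ∃ A : Fin n → Set G, IsAbelianPartition A}

/-- The maximal size of a noncommuting subset of `G`. -/
noncomputable def maxNoncommuting (G : Type*) [Group G] : ℕ :=
  sSup {k | ∃ S : Set G, S.ncard = k ∧ ∀ x ∈ S, ∀ y ∈ S, x ≠ y → x * y ≠ y * x}

lemma prod_ap {H K : Type*} [Group H] [Group K] [Finite H] [Finite K] {n m : ℕ}
    {A : Fin n → Set H} {B : Fin m → Set K}
    (hA : IsAbelianPartition A) (hB : IsAbelianPartition B) :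
    ∃ C : Fin (n * m) → Set (H × K), IsAbelianPartition C := by
  let e : Fin n × Fin m ≃ Fin (n * m) := finProdFinEquiv
  refine ⟨fun k => (A (e.symm k).1) ×ˢ (B (e.symm k).2), ?_, ?_, ?_, ?_⟩
  · intro k
    obtain ⟨a, a', ha, ha', hne⟩ :=
      (Set.one_lt_ncard_iff (Set.toFinite _)).mp (hA.1 (e.symm k).1)
    obtain ⟨b, _, hb, -, -⟩ :=
      (Set.one_lt_ncard_iff (Set.toFinite _)).mp (hB.1 (e.symm k).2)
    refine (Set.one_lt_ncard_iff (Set.toFinite _)).mpr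
      ⟨(a, b), (a', b), ⟨ha, hb⟩, ⟨ha', hb⟩, ?_⟩
    simp [hne]
  · ext ⟨h, k⟩
    simp only [Set.mem_iUnion, Set.mem_univ, iff_true]
    have h1 : h ∈ ⋃ i, A i := hA.2.1 ▸ Set.mem_univ h
    have h2 : k ∈ ⋃ j, B j := hB.2.1 ▸ Set.mem_univ k
    obtain ⟨i, hi⟩ := Set.mem_iUnion.mp h1
    obtain ⟨j, hj⟩ := Set.mem_iUnion.mp h2
    exact ⟨e (i, j), by simp [e.symm_apply_apply]; exact ⟨hi, hj⟩⟩
  · intro k k' hkk'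
    have : e.symm k ≠ e.symm k' := fun h => hkk' (e.symm.injective h)
    rw [Function.onFun, Set.disjoint_left]
    rintro ⟨x, y⟩ ⟨hx, hy⟩ ⟨hx', hy'⟩
    by_cases h1 : (e.symm k).1 = (e.symm k').1
    · have h2 : (e.symm k).2 ≠ (e.symm k').2 := fun h => this (Prod.ext h1 h)
      exact (hB.2.2.1 h2).le_bot ⟨hy, hy'⟩
    · exact (hA.2.2.1 h1).le_bot ⟨hx, hx'⟩
  · rintro k ⟨x1, x2⟩ ⟨hx1, hx2⟩ ⟨y1, y2⟩ ⟨hy1, hy2⟩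
    exact Prod.ext (hA.2.2.2 _ _ hx1 _ hy1) (hB.2.2.2 _ _ hx2 _ hy2)

theorem apDegree_prod_le
    {H K : Type*} [Group H] [Group K] [Finite H] [Finite K]
    (hH : ∃ (n : ℕ) (A : Fin n → Set H), IsAbelianPartition A)
    (hK : ∃ (n : ℕ) (B : Fin n → Set K), IsAbelianPartition B) :
    (∃ (n : ℕ) (C : Fin n → Set (H × K)), IsAbelianPartition C) ∧
      apDegree (H × K) ≤ apDegree H * apDegree K := by
  have hHne : {n | ∃ A : Fin n → Set H, IsAbelianPartition A}.Nonempty := by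
    obtain ⟨n, A, hA⟩ := hH; exact ⟨n, A, hA⟩
  have hKne : {n | ∃ B : Fin n → Set K, IsAbelianPartition B}.Nonempty := by
    obtain ⟨n, B, hB⟩ := hK; exact ⟨n, B, hB⟩
  obtain ⟨A, hA⟩ := Nat.sInf_mem hHne
  obtain ⟨B, hB⟩ := Nat.sInf_mem hKne
  obtain ⟨C, hC⟩ := prod_ap hA hB
  exact ⟨⟨_, C, hC⟩, Nat.sInf_le ⟨C, hC⟩⟩
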